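/- If μ₁ and μ₂ are fuzzy left ideals of a Γ-semiring S with μ₁(0)=μ₂(0)=1, then their composition μ₁∘μ₂, defined by (μ₁∘μ₂)(x) = sup over all representations x = Σ_{i=1}^{n} uᵢγᵢvᵢ of min over i of min(μ₁(uᵢ),μ₂(vᵢ)) (and 0 if no such representation exists), is a fuzzy left ideal of S. -/

import Mathlib

open Classical

/-- A Γ-semiring: additive commutative monoids `S` and `G` with a triadditive,
associative product `tmul : S → G → S → S` for which zero is absorbing. -/
class GammaSemiring (S : Type*) (G : Type*) [AddCommMonoid S] [AddCommMonoid G] where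
  tmul : S → G → S → S
  add_tmul : ∀ (a b : S) (γ : G) (c : S), tmul (a + b) γ c = tmul a γ c + tmul b γ c
  tmul_add : ∀ (a : S) (γ : G) (b c : S), tmul a γ (b + c) = tmul a γ b + tmul a γ c
  tmul_gadd : ∀ (a : S) (γ δ : G) (b : S), tmul a (γ + δ) b = tmul a γ b + tmul a δ b
  tmul_assoc : ∀ (a : S) (γ : G) (b : S) (δ : G) (c : S),
      tmul a γ (tmul b δ c) = tmul (tmul a γ b) δ c
  zero_tmul : ∀ (γ : G) (x : S), tmul 0 γ x = 0
  tmul_zero : ∀ (x : S) (γ : G), tmul x γ 0 = 0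
  tmul_gzero : ∀ (x y : S), tmul x 0 y = 0

/-- μ is a fuzzy left ideal: `[0,1]`-valued, `μ 0 = 1`, superadditive under `min`,
and `μ (xγy) ≥ μ y`. -/
def IsFuzzyLeftIdeal (S G : Type*) [AddCommMonoid S] [AddCommMonoid G]
    [GammaSemiring S G] (μ : S → ℝ) : Prop :=
  (∀ x, μ x ∈ Set.Icc (0 : ℝ) 1) ∧ μ 0 = 1 ∧
  (∀ x y, min (μ x) (μ y) ≤ μ (x + y)) ∧
  (∀ (x : S) (γ : G) (y : S), μ y ≤ μ (GammaSemiring.tmul x γ y))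

/-- μ is a fuzzy right ideal. -/
def IsFuzzyRightIdeal (S G : Type*) [AddCommMonoid S] [AddCommMonoid G]
    [GammaSemiring S G] (μ : S → ℝ) : Prop :=
  (∀ x, μ x ∈ Set.Icc (0 : ℝ) 1) ∧ μ 0 = 1 ∧
  (∀ x y, min (μ x) (μ y) ≤ μ (x + y)) ∧
  (∀ (x : S) (γ : G) (y : S), μ x ≤ μ (GammaSemiring.tmul x γ y))

/-- μ is a fuzzy (two-sided) ideal. -/
def IsFuzzyIdeal (S G : Type*) [AddCommMonoid S] [AddCommMonoid G]
    [GammaSemiring S G] (μ : S → ℝ) : Prop :=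
  (∀ x, μ x ∈ Set.Icc (0 : ℝ) 1) ∧ μ 0 = 1 ∧
  (∀ x y, min (μ x) (μ y) ≤ μ (x + y)) ∧
  (∀ (x : S) (γ : G) (y : S), max (μ x) (μ y) ≤ μ (GammaSemiring.tmul x γ y))

/-- The sum `μ ⊕ ν` of fuzzy subsets: `(μ ⊕ ν)(x) = sup { min (μ u) (ν v) : x = u + v }`. -/
noncomputable def fSum {S : Type*} [AddCommMonoid S] (μ ν : S → ℝ) : S → ℝ := fun x =>
  sSup {r : ℝ | ∃ u v : S, x = u + v ∧ r = min (μ u) (ν v)}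

/-- The product `μ Γ ν`: `(μ Γ ν)(x) = sup { min (μ u) (ν v) : x = uγv }`
(`sSup ∅ = 0` in `ℝ`, matching the convention that it is `0` with no representation). -/
noncomputable def fProd (S G : Type*) [AddCommMonoid S] [AddCommMonoid G]
    [GammaSemiring S G] (μ ν : S → ℝ) : S → ℝ := fun x =>
  sSup {r : ℝ | ∃ (u : S) (γ : G) (v : S),
    x = GammaSemiring.tmul u γ v ∧ r = min (μ u) (ν v)}

/-- The composition `μ ∘ ν`:
`(μ ∘ ν)(x) = sup { min_{1 ≤ i ≤ n} min (μ uᵢ) (ν vᵢ) : x = Σᵢ uᵢγᵢvᵢ, n ≥ 1 }`. -/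
noncomputable def fComp (S G : Type*) [AddCommMonoid S] [AddCommMonoid G]
    [GammaSemiring S G] (μ ν : S → ℝ) : S → ℝ := fun x =>
  sSup {r : ℝ | ∃ (n : ℕ) (u v : Fin (n + 1) → S) (γ : Fin (n + 1) → G),
    x = ∑ i, GammaSemiring.tmul (u i) (γ i) (v i) ∧
    r = Finset.univ.inf' Finset.univ_nonempty (fun i => min (μ (u i)) (ν (v i)))}

namespace FCompAux

open GammaSemiring

variable {S G : Type*} [AddCommMonoid S] [AddCommMonoid G] [GammaSemiring S G]

/-- The set whose supremum defines `fComp`. -/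
def compSet (S G : Type*) [AddCommMonoid S] [AddCommMonoid G] [GammaSemiring S G]
    (μ ν : S → ℝ) (x : S) : Set ℝ :=
  {r : ℝ | ∃ (n : ℕ) (u v : Fin (n + 1) → S) (γ : Fin (n + 1) → G),
    x = ∑ i, GammaSemiring.tmul (u i) (γ i) (v i) ∧
    r = Finset.univ.inf' Finset.univ_nonempty (fun i => min (μ (u i)) (ν (v i)))}

lemma fComp_eq (μ ν : S → ℝ) (x : S) : fComp S G μ ν x = sSup (compSet S G μ ν x) := rfl

lemma mem_compSet_icc {μ ν : S → ℝ} (hμ : ∀ x, μ x ∈ Set.Icc (0:ℝ) 1)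
    (hν : ∀ x, ν x ∈ Set.Icc (0:ℝ) 1) {x : S} {r : ℝ} (hr : r ∈ compSet S G μ ν x) :
    r ∈ Set.Icc (0:ℝ) 1 := by
  obtain ⟨n, u, v, γ, -, rfl⟩ := hr
  constructor
  · exact Finset.le_inf' _ _ fun i _ => le_min (hμ _).1 (hν _).1
  · exact le_trans (Finset.inf'_le _ (Finset.mem_univ (0 : Fin (n+1))))
      (min_le_of_left_le (hμ _).2)

lemma bddAbove_compSet {μ ν : S → ℝ} (hμ : ∀ x, μ x ∈ Set.Icc (0:ℝ) 1)
    (hν : ∀ x, ν x ∈ Set.Icc (0:ℝ) 1) (x : S) : BddAbove (compSet S G μ ν x) :=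
  ⟨1, fun _ hr => (mem_compSet_icc hμ hν hr).2⟩

lemma sSup_compSet_nonneg {μ ν : S → ℝ} (hμ : ∀ x, μ x ∈ Set.Icc (0:ℝ) 1)
    (hν : ∀ x, ν x ∈ Set.Icc (0:ℝ) 1) (x : S) : 0 ≤ sSup (compSet S G μ ν x) := by
  rcases Set.eq_empty_or_nonempty (compSet S G μ ν x) with h | ⟨r, hr⟩
  · simp [h]
  · exact le_trans (mem_compSet_icc hμ hν hr).1 (le_csSup (bddAbove_compSet hμ hν x) hr)

lemma tmul_sum (x : S) (γ : G) {n : ℕ} (f : Fin n → S) :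
    GammaSemiring.tmul x γ (∑ i, f i) = ∑ i, GammaSemiring.tmul x γ (f i) := by
  let φ : S →+ S :=
    { toFun := fun y => GammaSemiring.tmul x γ y
      map_zero' := GammaSemiring.tmul_zero x γ
      map_add' := GammaSemiring.tmul_add x γ }
  exact map_sum φ f Finset.univ

lemma inf'_append {m n : ℕ} (f : Fin (m + 1) → ℝ) (g : Fin (n + 1) → ℝ) :
    (Finset.univ.inf' Finset.univ_nonempty
        (fun i : Fin (m + 1 + n + 1) => Fin.append f g i)) =
      min (Finset.univ.inf' Finset.univ_nonempty f)
        (Finset.univ.inf' Finset.univ_nonempty g) := by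
  apply le_antisymm
  · refine le_min ?_ ?_
    · refine Finset.le_inf' _ _ fun j _ => ?_
      have := Finset.inf'_le (s := (Finset.univ : Finset (Fin (m + 1 + n + 1))))
        (b := (Fin.castAdd (n + 1) j : Fin ((m + 1) + (n + 1))))
        (fun i : Fin (m + 1 + n + 1) => Fin.append f g i) (Finset.mem_univ _)
      simpa only [Fin.append_left] using this
    · refine Finset.le_inf' _ _ fun j _ => ?_
      have := Finset.inf'_le (s := (Finset.univ : Finset (Fin (m + 1 + n + 1))))
        (b := (Fin.natAdd (m + 1) j : Fin ((m + 1) + (n + 1))))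
        (fun i : Fin (m + 1 + n + 1) => Fin.append f g i) (Finset.mem_univ _)
      simpa only [Fin.append_right] using this
  · refine Finset.le_inf' _ _ fun i _ => ?_
    refine Fin.addCases (m := m + 1) (n := n + 1)
      (motive := fun i => min (Finset.univ.inf' Finset.univ_nonempty f)
        (Finset.univ.inf' Finset.univ_nonempty g) ≤ Fin.append f g i)
      (fun j => ?_) (fun j => ?_) i
    · simp only [Fin.append_left]
      exact le_trans (min_le_left _ _) (Finset.inf'_le f (Finset.mem_univ j))
    · simp only [Fin.append_right]
      exact le_trans (min_le_right _ _) (Finset.inf'_le g (Finset.mem_univ j))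

lemma min_comp_append {m n : ℕ} (μ ν : S → ℝ)
    (u : Fin (m + 1) → S) (p : Fin (n + 1) → S)
    (v : Fin (m + 1) → S) (q : Fin (n + 1) → S) (i : Fin ((m + 1) + (n + 1))) :
    min (μ (Fin.append u p i)) (ν (Fin.append v q i)) =
      Fin.append (fun j => min (μ (u j)) (ν (v j)))
        (fun j => min (μ (p j)) (ν (q j))) i := by
  refine Fin.addCases (m := m + 1) (n := n + 1)
    (motive := fun i => min (μ (Fin.append u p i)) (ν (Fin.append v q i)) =
      Fin.append (fun j => min (μ (u j)) (ν (v j)))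
        (fun j => min (μ (p j)) (ν (q j))) i)
    (fun j => ?_) (fun j => ?_) i <;>
    simp [Fin.append_left, Fin.append_right]

lemma concat_mem {μ ν : S → ℝ} {x y : S} {a b : ℝ}
    (ha : a ∈ compSet S G μ ν x) (hb : b ∈ compSet S G μ ν y) :
    min a b ∈ compSet S G μ ν (x + y) := by
  obtain ⟨n, u, v, γ, hx, rfl⟩ := ha
  obtain ⟨m, p, q, δ, hy, rfl⟩ := hb
  refine ⟨n + 1 + m,
    (Fin.append u p : Fin ((n + 1) + (m + 1)) → S),
    (Fin.append v q : Fin ((n + 1) + (m + 1)) → S),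
    (Fin.append γ δ : Fin ((n + 1) + (m + 1)) → G), ?_, ?_⟩
  · show x + y = ∑ i : Fin ((n + 1) + (m + 1)),
      GammaSemiring.tmul (Fin.append u p i) (Fin.append γ δ i) (Fin.append v q i)
    rw [hx, hy, Fin.sum_univ_add (f := fun i : Fin ((n + 1) + (m + 1)) =>
      GammaSemiring.tmul (Fin.append u p i) (Fin.append γ δ i) (Fin.append v q i))]
    congr 1
    · exact Finset.sum_congr rfl fun i _ => by simp [Fin.append_left]
    · exact Finset.sum_congr rfl fun i _ => by simp [Fin.append_right]
  · rw [← inf'_append (f := fun j => min (μ (u j)) (ν (v j)))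
      (g := fun j => min (μ (p j)) (ν (q j)))]
    exact Finset.inf'_congr Finset.univ_nonempty rfl fun i _ => (min_comp_append μ ν u p v q i).symm

end FCompAux

open FCompAux in
theorem fComp_isFuzzyLeftIdeal {S G : Type*} [AddCommMonoid S] [AddCommMonoid G]
    [GammaSemiring S G] (μ₁ μ₂ : S → ℝ)
    (h₁ : IsFuzzyLeftIdeal S G μ₁) (h₂ : IsFuzzyLeftIdeal S G μ₂) :
    IsFuzzyLeftIdeal S G (fComp S G μ₁ μ₂) := by
  obtain ⟨hb₁, hz₁, ha₁, hl₁⟩ := h₁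
  obtain ⟨hb₂, hz₂, ha₂, hl₂⟩ := h₂
  refine ⟨?_, ?_, ?_, ?_⟩
  · intro x
    rw [fComp_eq]
    refine ⟨sSup_compSet_nonneg hb₁ hb₂ x, ?_⟩
    exact Real.sSup_le (fun r hr => (mem_compSet_icc hb₁ hb₂ hr).2) zero_le_one
  · rw [fComp_eq]
    have hmem : (1 : ℝ) ∈ compSet S G μ₁ μ₂ (0 : S) := by
      refine ⟨0, fun _ => 0, fun _ => 0, fun _ => 0, ?_, ?_⟩
      · simp [GammaSemiring.tmul_zero]
      · simp [hz₁, hz₂]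
    exact le_antisymm
      (Real.sSup_le (fun r hr => (mem_compSet_icc hb₁ hb₂ hr).2) zero_le_one)
      (le_csSup (bddAbove_compSet hb₁ hb₂ _) hmem)
  · intro x y
    rw [fComp_eq, fComp_eq, fComp_eq]
    rcases Set.eq_empty_or_nonempty (compSet S G μ₁ μ₂ x) with hA | hA
    · rw [hA, Real.sSup_empty]
      exact le_trans (min_le_left _ _) (sSup_compSet_nonneg hb₁ hb₂ _)
    rcases Set.eq_empty_or_nonempty (compSet S G μ₁ μ₂ y) with hB | hB
    · rw [hB, Real.sSup_empty]
      exact le_trans (min_le_right _ _) (sSup_compSet_nonneg hb₁ hb₂ _)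
    refine le_of_forall_pos_le_add fun ε hε => ?_
    obtain ⟨a, haA, ha⟩ := exists_lt_of_lt_csSup hA
      (show sSup (compSet S G μ₁ μ₂ x) - ε < sSup (compSet S G μ₁ μ₂ x) by linarith)
    obtain ⟨b, hbB, hb⟩ := exists_lt_of_lt_csSup hB
      (show sSup (compSet S G μ₁ μ₂ y) - ε < sSup (compSet S G μ₁ μ₂ y) by linarith)
    have hmem := concat_mem haA hbB
    have hle : min a b ≤ sSup (compSet S G μ₁ μ₂ (x + y)) :=
      le_csSup (bddAbove_compSet hb₁ hb₂ _) hmem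
    have : min (sSup (compSet S G μ₁ μ₂ x)) (sSup (compSet S G μ₁ μ₂ y)) - ε ≤ min a b := by
      rcases le_total a b with h | h
      · simp only [min_eq_left h]
        exact le_trans (sub_le_sub_right (min_le_left _ _) ε) ha.le
      · simp only [min_eq_right h]
        exact le_trans (sub_le_sub_right (min_le_right _ _) ε) hb.le
    linarith
  · intro x γ y
    rw [fComp_eq, fComp_eq]
    rcases Set.eq_empty_or_nonempty (compSet S G μ₁ μ₂ y) with hA | hA
    · rw [hA, Real.sSup_empty]
      exact sSup_compSet_nonneg hb₁ hb₂ _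
    refine csSup_le hA fun r hr => ?_
    obtain ⟨n, u, v, δ, hy, rfl⟩ := hr
    have hmem : (Finset.univ.inf' Finset.univ_nonempty
        (fun i => min (μ₁ (GammaSemiring.tmul x γ (u i))) (μ₂ (v i)))) ∈
        compSet S G μ₁ μ₂ (GammaSemiring.tmul x γ y) := by
      refine ⟨n, fun i => GammaSemiring.tmul x γ (u i), v, δ, ?_, rfl⟩
      rw [hy, tmul_sum]
      exact Finset.sum_congr rfl fun i _ => GammaSemiring.tmul_assoc x γ (u i) (δ i) (v i)
    refine le_trans ?_ (le_csSup (bddAbove_compSet hb₁ hb₂ _) hmem)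
    refine Finset.le_inf' _ _ fun i _ => ?_
    exact le_trans (Finset.inf'_le _ (Finset.mem_univ i))
      (min_le_min (hl₁ x γ (u i)) le_rfl)
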